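/- Fix a nonzero s ∈ Z/nZ and t with 6t ≤ n. If a pair of disjoint t-element sets I, J ⊆ Z/nZ is chosen uniformly at random, the probability that I and J are compatible for shift s (i.e., I, J, I−s, J+s are pairwise disjoint) is at least (1 − 4t/(n−2t))^{2t}. Equivalently, the number of ordered pairs of disjoint t-subsets compatible for s is at least (1 − 4t/(n−2t))^{2t} · C(n,t)·C(n−t,t). -/

import Mathlib

/-- `I` and `J` are compatible for shift `s`: the sets `I`, `J`, `I - s`, `J + s`
are pairwise disjoint. -/
def Compatible {n : ℕ} (I J : Finset (ZMod n)) (s : ZMod n) : Prop :=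
  Disjoint I J ∧ Disjoint I (I.image (· - s)) ∧ Disjoint I (J.image (· + s)) ∧
  Disjoint J (I.image (· - s)) ∧ Disjoint J (J.image (· + s)) ∧
  Disjoint (I.image (· - s)) (J.image (· + s))

instance {n : ℕ} (I J : Finset (ZMod n)) (s : ZMod n) : Decidable (Compatible I J s) := by
  unfold Compatible; infer_instance

section Aux
variable {n : ℕ} {s : ZMod n}

lemma compat_mono {I I' J J' : Finset (ZMod n)} (hI : I ⊆ I') (hJ : J ⊆ J')
    (h : Compatible I' J' s) : Compatible I J s := by
  obtain ⟨h1, h2, h3, h4, h5, h6⟩ := h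
  exact ⟨h1.mono hI hJ, h2.mono hI (Finset.image_subset_image hI),
    h3.mono hI (Finset.image_subset_image hJ), h4.mono hJ (Finset.image_subset_image hI),
    h5.mono hJ (Finset.image_subset_image hJ),
    h6.mono (Finset.image_subset_image hI) (Finset.image_subset_image hJ)⟩

def FL (I J : Finset (ZMod n)) (s : ZMod n) : Finset (ZMod n) :=
  I ∪ J ∪ I.image (· - s) ∪ I.image (· + s) ∪ J.image (· + s) ∪ J.image (fun a => a + s + s)

def FR (I J : Finset (ZMod n)) (s : ZMod n) : Finset (ZMod n) :=
  I ∪ J ∪ I.image (· - s) ∪ I.image (fun a => a - s - s) ∪ J.image (· + s) ∪ J.image (· - s)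

lemma card_FL (I J : Finset (ZMod n)) (s : ZMod n) :
    (FL I J s).card ≤ 3 * (I.card + J.card) := by
  have h1 := Finset.card_image_le (s := I) (f := (· - s))
  have h2 := Finset.card_image_le (s := I) (f := (· + s))
  have h3 := Finset.card_image_le (s := J) (f := (· + s))
  have h4 := Finset.card_image_le (s := J) (f := fun a => a + s + s)
  have u1 := Finset.card_union_le
    (I ∪ J ∪ I.image (· - s) ∪ I.image (· + s) ∪ J.image (· + s)) (J.image (fun a => a + s + s))
  have u2 := Finset.card_union_le (I ∪ J ∪ I.image (· - s) ∪ I.image (· + s)) (J.image (· + s))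
  have u3 := Finset.card_union_le (I ∪ J ∪ I.image (· - s)) (I.image (· + s))
  have u4 := Finset.card_union_le (I ∪ J) (I.image (· - s))
  have u5 := Finset.card_union_le I J
  unfold FL
  omega

lemma card_FR (I J : Finset (ZMod n)) (s : ZMod n) :
    (FR I J s).card ≤ 3 * (I.card + J.card) := by
  have h1 := Finset.card_image_le (s := I) (f := (· - s))
  have h2 := Finset.card_image_le (s := I) (f := fun a => a - s - s)
  have h3 := Finset.card_image_le (s := J) (f := (· + s))
  have h4 := Finset.card_image_le (s := J) (f := (· - s))
  have u1 := Finset.card_union_le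
    (I ∪ J ∪ I.image (· - s) ∪ I.image (fun a => a - s - s) ∪ J.image (· + s)) (J.image (· - s))
  have u2 := Finset.card_union_le (I ∪ J ∪ I.image (· - s) ∪ I.image (fun a => a - s - s))
    (J.image (· + s))
  have u3 := Finset.card_union_le (I ∪ J ∪ I.image (· - s)) (I.image (fun a => a - s - s))
  have u4 := Finset.card_union_le (I ∪ J) (I.image (· - s))
  have u5 := Finset.card_union_le I J
  unfold FR
  omega

lemma compat_insert_left (hs : s ≠ 0) {I J : Finset (ZMod n)} {x : ZMod n}
    (h : Compatible I J s) (hx : x ∉ FL I J s) : Compatible (insert x I) J s := by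
  simp only [FL, Finset.mem_union, not_or, Finset.mem_image, not_exists, not_and] at hx
  obtain ⟨⟨⟨⟨⟨hxI, hxJ⟩, h1⟩, h2⟩, h3⟩, h4⟩ := hx
  obtain ⟨c1, c2, c3, c4, c5, c6⟩ := h
  rw [Compatible, Finset.image_insert, Finset.disjoint_insert_left, Finset.disjoint_insert_left,
    Finset.disjoint_insert_right, Finset.disjoint_insert_right, Finset.disjoint_insert_left,
    Finset.disjoint_insert_left]
  refine ⟨⟨hxJ, c1⟩, ⟨?_, ?_, c2⟩, ⟨?_, c3⟩, ⟨?_, c4⟩, c5, ?_, c6⟩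
  · simp only [Finset.mem_insert, Finset.mem_image, not_or, not_exists, not_and]
    exact ⟨fun h => hs (by rwa [eq_comm, sub_eq_self] at h), h1⟩
  · exact fun hmem => h2 _ hmem (sub_add_cancel x s)
  · simp only [Finset.mem_image, not_exists, not_and]; exact h3
  · exact fun hmem => h3 _ hmem (sub_add_cancel x s)
  · simp only [Finset.mem_image, not_exists, not_and]
    intro a ha hEq
    exact h4 a ha (by rw [hEq, sub_add_cancel])

lemma compat_insert_right (hs : s ≠ 0) {I J : Finset (ZMod n)} {x : ZMod n}
    (h : Compatible I J s) (hx : x ∉ FR I J s) : Compatible I (insert x J) s := by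
  simp only [FR, Finset.mem_union, not_or, Finset.mem_image, not_exists, not_and] at hx
  obtain ⟨⟨⟨⟨⟨hxI, hxJ⟩, h1⟩, h2⟩, h3⟩, h4⟩ := hx
  obtain ⟨c1, c2, c3, c4, c5, c6⟩ := h
  rw [Compatible, Finset.image_insert, Finset.disjoint_insert_right, Finset.disjoint_insert_left,
    Finset.disjoint_insert_right, Finset.disjoint_insert_left, Finset.disjoint_insert_right,
    Finset.disjoint_insert_right]
  refine ⟨⟨hxI, c1⟩, c2, ⟨?_, c3⟩, ⟨?_, c4⟩, ⟨?_, ?_, c5⟩, ?_, c6⟩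
  · exact fun hmem => h1 _ hmem (add_sub_cancel_right x s)
  · simp only [Finset.mem_image, not_exists, not_and]; exact h1
  · simp only [Finset.mem_insert, Finset.mem_image, not_or, not_exists, not_and]
    exact ⟨fun h => hs (by rwa [left_eq_add] at h), h3⟩
  · exact fun hmem => h4 _ hmem (add_sub_cancel_right x s)
  · simp only [Finset.mem_image, not_exists, not_and]
    intro a ha hEq
    exact h2 a ha (by rw [hEq, add_sub_cancel_right])

end Aux

section Count
variable {n : ℕ} [NeZero n]

/-- pairs of compatible sets of given sizes -/
def AA (s : ZMod n) (k l : ℕ) : Finset (Finset (ZMod n) × Finset (ZMod n)) :=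
  Finset.univ.filter (fun p => p.1.card = k ∧ p.2.card = l ∧ Compatible p.1 p.2 s)

lemma step_left {s : ZMod n} (hs : s ≠ 0) (k l : ℕ) :
    (AA s k l).card * (n - 3 * (k + l)) ≤ (AA s (k + 1) l).card * (k + 1) := by
  classical
  refine Finset.card_mul_le_card_mul (fun p q => p.2 = q.2 ∧ p.1 ⊆ q.1) ?_ ?_
  · rintro ⟨I, J⟩ hp
    simp only [AA, Finset.mem_filter, Finset.mem_univ, true_and] at hp
    obtain ⟨hI, hJ, hC⟩ := hp
    set ext : Finset (ZMod n) := Finset.univ \ FL I J s with hext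
    have hcard_ext : n - 3 * (k + l) ≤ ext.card := by
      rw [hext, Finset.card_sdiff_of_subset (Finset.subset_univ _), Finset.card_univ, ZMod.card]
      have := card_FL I J s
      omega
    calc n - 3 * (k + l) ≤ ext.card := hcard_ext
      _ = (ext.image (fun x => (insert x I, J))).card := by
          rw [Finset.card_image_of_injOn]
          intro x hx y hy hxy
          have hxI : x ∉ I := by
            simp only [hext, Finset.mem_coe, Finset.mem_sdiff] at hx
            exact fun hmem => hx.2 (by simp [FL, Finset.mem_union, hmem])
          exact (Finset.insert_inj hxI).mp (congrArg Prod.fst hxy)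
      _ ≤ _ := by
          apply Finset.card_le_card
          intro q hq
          simp only [Finset.mem_image] at hq
          obtain ⟨x, hx, rfl⟩ := hq
          rw [hext, Finset.mem_sdiff] at hx
          have hxF : x ∉ FL I J s := hx.2
          have hxI : x ∉ I := fun hmem => hxF (by simp [FL, Finset.mem_union, hmem])
          refine (Finset.mem_bipartiteAbove _).mpr ⟨?_, rfl, Finset.subset_insert _ _⟩
          simp only [AA, Finset.mem_filter, Finset.mem_univ, true_and]
          exact ⟨by rw [Finset.card_insert_of_notMem hxI, hI], hJ,
            compat_insert_left hs hC hxF⟩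
  · rintro ⟨I, J⟩ hq
    simp only [AA, Finset.mem_filter, Finset.mem_univ, true_and] at hq
    obtain ⟨hI, hJ, hC⟩ := hq
    calc ((AA s k l).bipartiteBelow (fun p q => p.2 = q.2 ∧ p.1 ⊆ q.1) (I, J)).card
        ≤ (I.powersetCard k).card := by
          apply Finset.card_le_card_of_injOn (fun p => p.1)
          · intro p hp
            simp only [Finset.mem_coe, Finset.mem_bipartiteBelow, AA, Finset.mem_filter, Finset.mem_univ,
              true_and] at hp
            exact Finset.mem_powersetCard.mpr ⟨hp.2.2, hp.1.1⟩
          · intro p hp p' hp' hpp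
            simp only [Finset.mem_coe, Finset.mem_bipartiteBelow] at hp hp'
            exact Prod.ext hpp (hp.2.1.trans hp'.2.1.symm)
      _ = k + 1 := by rw [Finset.card_powersetCard, hI, Nat.choose_succ_self_right]

lemma step_right {s : ZMod n} (hs : s ≠ 0) (k l : ℕ) :
    (AA s k l).card * (n - 3 * (k + l)) ≤ (AA s k (l + 1)).card * (l + 1) := by
  classical
  refine Finset.card_mul_le_card_mul (fun p q => p.1 = q.1 ∧ p.2 ⊆ q.2) ?_ ?_
  · rintro ⟨I, J⟩ hp
    simp only [AA, Finset.mem_filter, Finset.mem_univ, true_and] at hp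
    obtain ⟨hI, hJ, hC⟩ := hp
    set ext : Finset (ZMod n) := Finset.univ \ FR I J s with hext
    have hcard_ext : n - 3 * (k + l) ≤ ext.card := by
      rw [hext, Finset.card_sdiff_of_subset (Finset.subset_univ _), Finset.card_univ, ZMod.card]
      have := card_FR I J s
      omega
    calc n - 3 * (k + l) ≤ ext.card := hcard_ext
      _ = (ext.image (fun x => (I, insert x J))).card := by
          rw [Finset.card_image_of_injOn]
          intro x hx y hy hxy
          have hxJ : x ∉ J := by
            simp only [hext, Finset.mem_coe, Finset.mem_sdiff] at hx
            exact fun hmem => hx.2 (by simp [FR, Finset.mem_union, hmem])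
          exact (Finset.insert_inj hxJ).mp (congrArg Prod.snd hxy)
      _ ≤ _ := by
          apply Finset.card_le_card
          intro q hq
          simp only [Finset.mem_image] at hq
          obtain ⟨x, hx, rfl⟩ := hq
          rw [hext, Finset.mem_sdiff] at hx
          have hxF : x ∉ FR I J s := hx.2
          have hxJ : x ∉ J := fun hmem => hxF (by simp [FR, Finset.mem_union, hmem])
          refine (Finset.mem_bipartiteAbove _).mpr ⟨?_, rfl, Finset.subset_insert _ _⟩
          simp only [AA, Finset.mem_filter, Finset.mem_univ, true_and]
          exact ⟨hI, by rw [Finset.card_insert_of_notMem hxJ, hJ],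
            compat_insert_right hs hC hxF⟩
  · rintro ⟨I, J⟩ hq
    simp only [AA, Finset.mem_filter, Finset.mem_univ, true_and] at hq
    obtain ⟨hI, hJ, hC⟩ := hq
    calc ((AA s k l).bipartiteBelow (fun p q => p.1 = q.1 ∧ p.2 ⊆ q.2) (I, J)).card
        ≤ (J.powersetCard l).card := by
          apply Finset.card_le_card_of_injOn (fun p => p.2)
          · intro p hp
            simp only [Finset.mem_coe, Finset.mem_bipartiteBelow, AA, Finset.mem_filter, Finset.mem_univ,
              true_and] at hp
            exact Finset.mem_powersetCard.mpr ⟨hp.2.2, hp.1.2.1⟩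
          · intro p hp p' hp' hpp
            simp only [Finset.mem_coe, Finset.mem_bipartiteBelow] at hp hp'
            exact Prod.ext (hp.2.1.trans hp'.2.1.symm) hpp
      _ = l + 1 := by rw [Finset.card_powersetCard, hJ, Nat.choose_succ_self_right]

lemma AA_zero (s : ZMod n) : AA s 0 0 = {((∅ : Finset (ZMod n)), (∅ : Finset (ZMod n)))} := by
  ext ⟨I, J⟩
  simp only [AA, Finset.mem_filter, Finset.mem_univ, true_and, Finset.card_eq_zero,
    Finset.mem_singleton, Prod.mk.injEq]
  constructor
  · rintro ⟨h1, h2, -⟩; exact ⟨h1, h2⟩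
  · rintro ⟨rfl, rfl⟩
    refine ⟨rfl, rfl, ?_⟩
    simp [Compatible]

end Count

section Chain
variable {n : ℕ} [NeZero n]

def mult (t i : ℕ) : ℕ := if i < t then i + 1 else i - t + 1

lemma prod_succ_eq_factorial (t : ℕ) : (∏ i ∈ Finset.range t, (i + 1)) = t.factorial := by
  induction t with
  | zero => simp
  | succ t ih => rw [Finset.prod_range_succ, ih, Nat.factorial_succ]; ring

lemma prod_mult (t : ℕ) : (∏ i ∈ Finset.range (2 * t), mult t i) = t.factorial * t.factorial := by
  rw [two_mul, Finset.prod_range_add]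
  have e1 : (∏ i ∈ Finset.range t, mult t i) = t.factorial := by
    rw [← prod_succ_eq_factorial]
    exact Finset.prod_congr rfl fun i hi => by
      simp only [mult, if_pos (Finset.mem_range.mp hi)]
  have e2 : (∏ i ∈ Finset.range t, mult t (t + i)) = t.factorial := by
    rw [← prod_succ_eq_factorial]
    refine Finset.prod_congr rfl fun i hi => ?_
    simp only [mult]
    rw [if_neg (by omega)]
    omega
  rw [e1, e2]

lemma chain {s : ZMod n} (hs : s ≠ 0) (t : ℕ) :
    ∀ m, m ≤ 2 * t →
      (∏ i ∈ Finset.range m, (n - 3 * i)) ≤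
        (AA s (min m t) (m - t)).card * ∏ i ∈ Finset.range m, mult t i := by
  intro m
  induction m with
  | zero => intro _; simp [AA_zero]
  | succ m ih =>
    intro hm
    have ihm := ih (by omega)
    rw [Finset.prod_range_succ, Finset.prod_range_succ]
    by_cases hmt : m < t
    · have e1 : min m t = m := by omega
      have e2 : m - t = 0 := by omega
      have e3 : min (m + 1) t = m + 1 := by omega
      have e4 : (m + 1) - t = 0 := by omega
      have hstep := step_left (n := n) hs m 0
      rw [e1, e2] at ihm
      rw [e3, e4]
      have hmult : mult t m = m + 1 := by simp [mult, hmt]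
      rw [hmult]
      calc (∏ i ∈ Finset.range m, (n - 3 * i)) * (n - 3 * m)
          ≤ ((AA s m 0).card * ∏ i ∈ Finset.range m, mult t i) * (n - 3 * m) :=
            Nat.mul_le_mul_right _ ihm
        _ = ((AA s m 0).card * (n - 3 * (m + 0))) * ∏ i ∈ Finset.range m, mult t i := by
            rw [Nat.add_zero]; ring
        _ ≤ ((AA s (m + 1) 0).card * (m + 1)) * ∏ i ∈ Finset.range m, mult t i :=
            Nat.mul_le_mul_right _ hstep
        _ = (AA s (m + 1) 0).card * ((∏ i ∈ Finset.range m, mult t i) * (m + 1)) := by ring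
    · have htm : t ≤ m := by omega
      have e1 : min m t = t := by omega
      have e3 : min (m + 1) t = t := by omega
      have e4 : (m + 1) - t = (m - t) + 1 := by omega
      have hstep := step_right (n := n) hs t (m - t)
      have e5 : t + (m - t) = m := by omega
      rw [e5] at hstep
      rw [e1] at ihm
      rw [e3, e4]
      have hmult : mult t m = (m - t) + 1 := by simp [mult, Nat.not_lt.mpr htm]
      rw [hmult]
      calc (∏ i ∈ Finset.range m, (n - 3 * i)) * (n - 3 * m)
          ≤ ((AA s t (m - t)).card * ∏ i ∈ Finset.range m, mult t i) * (n - 3 * m) :=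
            Nat.mul_le_mul_right _ ihm
        _ = ((AA s t (m - t)).card * (n - 3 * m)) * ∏ i ∈ Finset.range m, mult t i := by ring
        _ ≤ ((AA s t ((m - t) + 1)).card * ((m - t) + 1)) * ∏ i ∈ Finset.range m, mult t i :=
            Nat.mul_le_mul_right _ hstep
        _ = (AA s t ((m - t) + 1)).card *
              ((∏ i ∈ Finset.range m, mult t i) * ((m - t) + 1)) := by ring

end Chain

theorem card_compatible_pairs_ge (n t : ℕ) [NeZero n] (s : ZMod n) (hs : s ≠ 0)
    (ht : 6 * t ≤ n) :
    ((Finset.univ.filter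
      (fun p : Finset (ZMod n) × Finset (ZMod n) =>
        p.1.card = t ∧ p.2.card = t ∧ Disjoint p.1 p.2 ∧
          Compatible p.1 p.2 s)).card : ℝ) ≥
    (1 - 4 * t / (n - 2 * t : ℝ)) ^ (2 * t) *
      (Nat.choose n t : ℝ) * (Nat.choose (n - t) t : ℝ) := by
  classical
  have hset : (Finset.univ.filter
      (fun p : Finset (ZMod n) × Finset (ZMod n) =>
        p.1.card = t ∧ p.2.card = t ∧ Disjoint p.1 p.2 ∧ Compatible p.1 p.2 s)) = AA s t t := by
    unfold AA
    apply Finset.filter_congr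
    intro p _
    constructor
    · rintro ⟨h1, h2, _, h4⟩; exact ⟨h1, h2, h4⟩
    · rintro ⟨h1, h2, h4⟩; exact ⟨h1, h2, h4.1, h4⟩
  rw [hset, ge_iff_le]
  have hchain := chain (n := n) hs t (2 * t) le_rfl
  have emin : min (2 * t) t = t := by omega
  have esub : 2 * t - t = t := by omega
  rw [emin, esub, prod_mult] at hchain
  -- hchain : ∏ i ∈ range (2t), (n - 3i) ≤ (AA s t t).card * (t.factorial * t.factorial)
  have hfac : (0 : ℝ) < ((t.factorial * t.factorial : ℕ) : ℝ) := by
    have := Nat.factorial_pos t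
    positivity
  rw [← mul_le_mul_iff_of_pos_right hfac]
  set D : ℝ := (n : ℝ) - 2 * t with hD
  have hn6 : (6 * t : ℝ) ≤ (n : ℝ) := by exact_mod_cast ht
  have d3 : n.descFactorial t * (n - t).descFactorial t = ∏ i ∈ Finset.range (2 * t), (n - i) := by
    rw [Nat.descFactorial_eq_prod_range, Nat.descFactorial_eq_prod_range, two_mul,
      Finset.prod_range_add]
    congr 1
    exact Finset.prod_congr rfl fun i _ => by omega
  calc (1 - 4 * t / D) ^ (2 * t) * (Nat.choose n t : ℝ) * (Nat.choose (n - t) t : ℝ) *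
        ((t.factorial * t.factorial : ℕ) : ℝ)
      = (1 - 4 * t / D) ^ (2 * t) *
          (((t.factorial * Nat.choose n t) * (t.factorial * Nat.choose (n - t) t) : ℕ) : ℝ) := by
        push_cast; ring
    _ = (1 - 4 * t / D) ^ (2 * t) *
          ((n.descFactorial t * (n - t).descFactorial t : ℕ) : ℝ) := by
        rw [← Nat.descFactorial_eq_factorial_mul_choose, ← Nat.descFactorial_eq_factorial_mul_choose]
    _ = (1 - 4 * t / D) ^ (2 * t) * ∏ i ∈ Finset.range (2 * t), ((n - i : ℕ) : ℝ) := by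
        rw [d3, Nat.cast_prod]
    _ = ∏ i ∈ Finset.range (2 * t), ((1 - 4 * t / D) * ((n - i : ℕ) : ℝ)) := by
        rw [Finset.prod_mul_distrib, Finset.prod_const, Finset.card_range]
    _ ≤ ∏ i ∈ Finset.range (2 * t), ((n - 3 * i : ℕ) : ℝ) := by
        apply Finset.prod_le_prod
        · intro i hi
          have hi2 : i < 2 * t := Finset.mem_range.mp hi
          have ht1 : 1 ≤ t := by omega
          have ht1' : (1 : ℝ) ≤ (t : ℝ) := by exact_mod_cast ht1
          have hDpos : 0 < D := by rw [hD]; linarith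
          have hδ : 4 * (t : ℝ) / D ≤ 1 := by
            rw [div_le_one hDpos]; linarith
          have hni : (0 : ℝ) ≤ ((n - i : ℕ) : ℝ) := Nat.cast_nonneg _
          nlinarith [hni]
        · intro i hi
          have hi2 : i < 2 * t := Finset.mem_range.mp hi
          have ht1 : 1 ≤ t := by omega
          have ht1' : (1 : ℝ) ≤ (t : ℝ) := by exact_mod_cast ht1
          have hDpos : 0 < D := by rw [hD]; linarith
          have hi' : (i : ℝ) < 2 * t := by exact_mod_cast hi2
          have hni : ((n - i : ℕ) : ℝ) = (n : ℝ) - i := by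
            rw [Nat.cast_sub (by omega)]
          have hn3i : ((n - 3 * i : ℕ) : ℝ) = (n : ℝ) - 3 * i := by
            rw [Nat.cast_sub (by omega)]; push_cast; ring
          rw [hni, hn3i]
          have key : 2 * (i : ℝ) ≤ 4 * t * ((n : ℝ) - i) / D := by
            rw [le_div_iff₀ hDpos, hD]
            nlinarith [mul_le_mul_of_nonneg_right (le_of_lt hi') (Nat.cast_nonneg (α := ℝ) n)]
          have expand : (1 - 4 * t / D) * ((n : ℝ) - i) =
              ((n : ℝ) - i) - 4 * t * ((n : ℝ) - i) / D := by
            rw [sub_mul, one_mul, div_mul_eq_mul_div]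
          linarith
    _ = ((∏ i ∈ Finset.range (2 * t), (n - 3 * i) : ℕ) : ℝ) := (Nat.cast_prod _ _).symm
    _ ≤ (((AA s t t).card * (t.factorial * t.factorial) : ℕ) : ℝ) := Nat.cast_le.mpr hchain
    _ = ((AA s t t).card : ℝ) * ((t.factorial * t.factorial : ℕ) : ℝ) := by push_cast; ring
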